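/- For any three real (or complex) numbers x, y, z with pairwise differences not multiples of 2π, the function φ(t) = (1/2)·cot(t/2) satisfies φ(x−y)·φ(x−z) + φ(y−x)·φ(y−z) + φ(z−x)·φ(z−y) = −1/4. -/
import Mathlib

lemma cot_key (sa ca sc cc : ℝ) (ha : sa ≠ 0) (hc : sc ≠ 0)
    (hb : sa * cc + ca * sc ≠ 0) :
    (1/2 * (ca/sa)) * (1/2 * ((ca*cc - sa*sc)/(sa*cc + ca*sc)))
      + (1/2 * (ca / -sa)) * (1/2 * (cc/sc))
      + (1/2 * ((ca*cc - sa*sc) / -(sa*cc + ca*sc))) * (1/2 * (cc / -sc)) = -(1/4) := by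
  rw [div_neg, div_neg, div_neg]
  field_simp
  ring

/-- For any three reals `x, y, z` with pairwise differences not multiples of `2π`
(equivalently, the sines of half the differences are nonzero), the function
`φ(t) = (1/2)·cot(t/2)` satisfies
`φ(x−y)·φ(x−z) + φ(y−x)·φ(y−z) + φ(z−x)·φ(z−y) = −1/4`. -/
theorem stmt0 (x y z : ℝ)
    (hxy : Real.sin ((x - y) / 2) ≠ 0)
    (hxz : Real.sin ((x - z) / 2) ≠ 0)
    (hyz : Real.sin ((y - z) / 2) ≠ 0) :
    ((1/2) * Real.cot ((x - y) / 2)) * ((1/2) * Real.cot ((x - z) / 2))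
      + ((1/2) * Real.cot ((y - x) / 2)) * ((1/2) * Real.cot ((y - z) / 2))
      + ((1/2) * Real.cot ((z - x) / 2)) * ((1/2) * Real.cot ((z - y) / 2)) = -(1/4) := by
  have e1 : (y - x) / 2 = -((x - y) / 2) := by ring
  have e2 : (z - x) / 2 = -((x - z) / 2) := by ring
  have e3 : (z - y) / 2 = -((y - z) / 2) := by ring
  have e4 : (x - z) / 2 = (x - y) / 2 + (y - z) / 2 := by ring
  rw [e4] at hxz
  rw [e1, e2, e3, e4]
  simp only [Real.cot_eq_cos_div_sin, Real.sin_add, Real.cos_add, Real.sin_neg,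
    Real.cos_neg] at hxz ⊢
  exact cot_key _ _ _ _ hxy hyz hxz
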